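/- Let H be a self-adjoint operator on a Hilbert space, Q its quadratic form, and P₁,…,P₃ operators with Q(u) = Σⱼ ‖Pⱼu‖² and H = ΣⱼPⱼ*Pⱼ on suitable domains. If Hψ = λψ and a is an operator such that all terms are defined, then λ‖aψ‖² = Q(aψ) + Σⱼ ⟨Pⱼψ, [Pⱼ, a*] aψ⟩ + Σⱼ ⟨[a, Pⱼ]ψ, Pⱼ(aψ)⟩. -/
import Mathlib


open scoped InnerProductSpace ComplexConjugate

/-- the commutator formula (Lemma `new-IMS`): if `H = Σⱼ Pⱼ*Pⱼ` (weakly),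
`Q(u) = Σⱼ ‖Pⱼu‖²`, `a*` is the formal adjoint of `a`, and `Hψ = λψ`, then
`λ‖aψ‖² = Q(aψ) + Σⱼ ⟨Pⱼψ, [Pⱼ, a*] aψ⟩ + Σⱼ ⟨[a, Pⱼ]ψ, Pⱼ(aψ)⟩`. -/
theorem stmt6 {E : Type*} [NormedAddCommGroup E] [InnerProductSpace ℂ E]
    (H : E →ₗ[ℂ] E) (P : Fin 3 → E →ₗ[ℂ] E) (a astar : E →ₗ[ℂ] E)
    (hH : ∀ u v : E, ⟪H u, v⟫_ℂ = ∑ j : Fin 3, ⟪P j u, P j v⟫_ℂ)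
    (hadj : ∀ u v : E, ⟪a u, v⟫_ℂ = ⟪u, astar v⟫_ℂ)
    (ψ : E) (lam : ℝ) (hψ : H ψ = (lam : ℂ) • ψ) :
    (lam : ℂ) * ((‖a ψ‖ ^ 2 : ℝ) : ℂ)
      = ((∑ j : Fin 3, ‖P j (a ψ)‖ ^ 2 : ℝ) : ℂ)
        + ∑ j : Fin 3, ⟪P j ψ, P j (astar (a ψ)) - astar (P j (a ψ))⟫_ℂ
        + ∑ j : Fin 3, ⟪a (P j ψ) - P j (a ψ), P j (a ψ)⟫_ℂ := by
  have hL : ⟪H ψ, astar (a ψ)⟫_ℂ = (lam : ℂ) * ((‖a ψ‖ ^ 2 : ℝ) : ℂ) := by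
    rw [hψ, inner_smul_left, ← hadj, Complex.conj_ofReal,
      inner_self_eq_norm_sq_to_K]
    push_cast
    norm_num [RCLike.ofReal_alg]
  have hR : ⟪H ψ, astar (a ψ)⟫_ℂ
      = ((∑ j : Fin 3, ‖P j (a ψ)‖ ^ 2 : ℝ) : ℂ)
        + ∑ j : Fin 3, ⟪P j ψ, P j (astar (a ψ)) - astar (P j (a ψ))⟫_ℂ
        + ∑ j : Fin 3, ⟪a (P j ψ) - P j (a ψ), P j (a ψ)⟫_ℂ := by
    rw [hH]
    push_cast
    rw [← Finset.sum_add_distrib, ← Finset.sum_add_distrib]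
    refine Finset.sum_congr rfl fun j _ => ?_
    have h1 : ⟪P j ψ, P j (astar (a ψ))⟫_ℂ
        = ⟪P j ψ, P j (astar (a ψ)) - astar (P j (a ψ))⟫_ℂ
          + ⟪P j ψ, astar (P j (a ψ))⟫_ℂ := by
      rw [← inner_add_right, sub_add_cancel]
    have h2 : ⟪P j ψ, astar (P j (a ψ))⟫_ℂ
        = ⟪a (P j ψ) - P j (a ψ), P j (a ψ)⟫_ℂ + ((‖P j (a ψ)‖ ^ 2 : ℝ) : ℂ) := by
      rw [← hadj, inner_sub_left, inner_self_eq_norm_sq_to_K]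
      push_cast
      norm_num [RCLike.ofReal_alg]
    rw [h1, h2]; push_cast; ring
  rw [← hL, hR]
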